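/- Let α > 0, let u be an axially symmetric solution, and set G(x) = (1-x²)u'(x). Define Ĝ(x) = -15(1-x²)G'''(x) + 120x·G''(x) + 150·G'(x) and G̃(x) = -15(1-x²)G'''(x) + 120x·G''(x) + 160·G'(x). Then Ĝ(x) ≤ 150/α for all x ∈ (-1,1), and consequently G̃(x) ≤ 160/α for all x ∈ (-1,1). -/

import Mathlib

open Real MeasureTheory intervalIntegral Set

noncomputable section

/-- `γ = ∫_{-1}^1 (1-x²)² e^{6u(x)} dx`. -/
def gammaInt (u : ℝ → ℝ) : ℝ :=
  ∫ x in (-1 : ℝ)..1, (1 - x ^ 2) ^ 2 * Real.exp (6 * u x)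

/-- `u` is an axially symmetric solution: it is C^∞ on an open interval containing `[-1,1]`,
satisfies the fifth-order ODE `-α ((1-x²)³ u')⁽⁵⁾ + 120 - 128 e^{6u}/γ = 0` on `(-1,1)`,
and the mass-center constraint `∫ x (1-x²)² e^{6u} = 0`. -/
def IsAxiSymSolution (α : ℝ) (u : ℝ → ℝ) : Prop :=
  (∃ s : Set ℝ, IsOpen s ∧ Set.Icc (-1 : ℝ) 1 ⊆ s ∧ ContDiffOn ℝ (⊤ : ℕ∞) u s) ∧
  (∀ x ∈ Set.Ioo (-1 : ℝ) 1,
    -α * iteratedDeriv 5 (fun y : ℝ => (1 - y ^ 2) ^ 3 * deriv u y) x + 120 -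
      128 * Real.exp (6 * u x) / gammaInt u = 0) ∧
  (∫ x in (-1 : ℝ)..1, x * (1 - x ^ 2) ^ 2 * Real.exp (6 * u x)) = 0

/-- Derivative of a generic quartic polynomial. -/
lemma hasDerivAt_poly4 (c0 c1 c2 c3 c4 t : ℝ) :
    HasDerivAt (fun y : ℝ => c0 + c1 * y + c2 * y ^ 2 + c3 * y ^ 3 + c4 * y ^ 4)
      (c1 + 2 * c2 * t + 3 * c3 * t ^ 2 + 4 * c4 * t ^ 3) t := by
  have h := ((((hasDerivAt_const t c0).add ((hasDerivAt_id' (x := t)).const_mul c1)).add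
      ((hasDerivAt_pow 2 t).const_mul c2)).add ((hasDerivAt_pow 3 t).const_mul c3)).add
      ((hasDerivAt_pow 4 t).const_mul c4)
  refine h.congr_deriv ?_
  push_cast
  ring

/-- The integration-by-parts antiderivative of `q(t)·F⁽⁵⁾(t)` for a quartic `q`. -/
def Phi5 (F : ℝ → ℝ) (c0 c1 c2 c3 c4 t : ℝ) : ℝ :=
    (c0 + c1 * t + c2 * t ^ 2 + c3 * t ^ 3 + c4 * t ^ 4) * deriv^[4] F t
  - (c1 + 2 * c2 * t + 3 * c3 * t ^ 2 + 4 * c4 * t ^ 3 + 0 * t ^ 4) * deriv^[3] F t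
  + (2 * c2 + 6 * c3 * t + 12 * c4 * t ^ 2 + 0 * t ^ 3 + 0 * t ^ 4) * deriv^[2] F t
  - (6 * c3 + 24 * c4 * t + 0 * t ^ 2 + 0 * t ^ 3 + 0 * t ^ 4) * deriv^[1] F t
  + (24 * c4 + 0 * t + 0 * t ^ 2 + 0 * t ^ 3 + 0 * t ^ 4) * F t

lemma ftc5 {F : ℝ → ℝ} {s : Set ℝ}
    (hd : ∀ i : ℕ, ∀ t ∈ s, HasDerivAt (deriv^[i] F) (deriv^[i + 1] F t) t)
    (hc : ContinuousOn (deriv^[5] F) s)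
    (c0 c1 c2 c3 c4 : ℝ) {a b : ℝ} (hab : Set.uIcc a b ⊆ s) :
    ∫ t in a..b, (c0 + c1 * t + c2 * t ^ 2 + c3 * t ^ 3 + c4 * t ^ 4) * deriv^[5] F t
      = Phi5 F c0 c1 c2 c3 c4 b - Phi5 F c0 c1 c2 c3 c4 a := by
  have key : ∀ t ∈ Set.uIcc a b, HasDerivAt (fun y => Phi5 F c0 c1 c2 c3 c4 y)
      ((c0 + c1 * t + c2 * t ^ 2 + c3 * t ^ 3 + c4 * t ^ 4) * deriv^[5] F t) t := by
    intro t ht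
    have ht' := hab ht
    have h0 : HasDerivAt F (deriv^[1] F t) t := hd 0 t ht'
    have h1 : HasDerivAt (deriv^[1] F) (deriv^[2] F t) t := hd 1 t ht'
    have h2 : HasDerivAt (deriv^[2] F) (deriv^[3] F t) t := hd 2 t ht'
    have h3 : HasDerivAt (deriv^[3] F) (deriv^[4] F t) t := hd 3 t ht'
    have h4 : HasDerivAt (deriv^[4] F) (deriv^[5] F t) t := hd 4 t ht'
    have q0 := hasDerivAt_poly4 c0 c1 c2 c3 c4 t
    have q1 := hasDerivAt_poly4 c1 (2 * c2) (3 * c3) (4 * c4) 0 t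
    have q2 := hasDerivAt_poly4 (2 * c2) (6 * c3) (12 * c4) 0 0 t
    have q3 := hasDerivAt_poly4 (6 * c3) (24 * c4) 0 0 0 t
    have q4 := hasDerivAt_poly4 (24 * c4) 0 0 0 0 t
    have H := ((((q0.mul h4).sub (q1.mul h3)).add (q2.mul h2)).sub (q3.mul h1)).add
      (q4.mul h0)
    refine H.congr_deriv ?_
    · push_cast; ring
  rw [intervalIntegral.integral_eq_sub_of_hasDerivAt key]
  exact (((by fun_prop : Continuous fun t : ℝ => c0 + c1 * t + c2 * t ^ 2 + c3 * t ^ 3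
      + c4 * t ^ 4).continuousOn).mul (hc.mono hab)).intervalIntegrable

set_option maxHeartbeats 1000000 in
theorem Ghat_Gtilde_bound (α : ℝ) (u G : ℝ → ℝ) (hα : 0 < α)
    (hu : IsAxiSymSolution α u)
    (hG : ∀ x, G x = (1 - x ^ 2) * deriv u x) :
    (∀ x ∈ Set.Ioo (-1 : ℝ) 1,
      -15 * (1 - x ^ 2) * iteratedDeriv 3 G x + 120 * x * iteratedDeriv 2 G x
        + 150 * deriv G x ≤ 150 / α) ∧
    (∀ x ∈ Set.Ioo (-1 : ℝ) 1,
      -15 * (1 - x ^ 2) * iteratedDeriv 3 G x + 120 * x * iteratedDeriv 2 G x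
        + 160 * deriv G x ≤ 160 / α) := by
  obtain ⟨⟨s, hs_open, hs_sub, hu_smooth⟩, hODE, -⟩ := hu
  set F : ℝ → ℝ := fun y : ℝ => (1 - y ^ 2) ^ 3 * deriv u y with hFdef
  have hu_cont : ContinuousOn u s := hu_smooth.continuousOn
  have hexp_cont : ContinuousOn (fun t : ℝ => 120 - 128 * Real.exp (6 * u t) / gammaInt u) s :=
    continuousOn_const.sub ((continuousOn_const.mul
      (Real.continuous_exp.comp_continuousOn (continuousOn_const.mul hu_cont))).div_const _)
  have hγ : 0 < gammaInt u := by
    have hci : ContinuousOn (fun x : ℝ => (1 - x ^ 2) ^ 2 * Real.exp (6 * u x))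
        (Set.uIcc (-1 : ℝ) 1) := by
      rw [Set.uIcc_of_le (by norm_num : (-1 : ℝ) ≤ 1)]
      exact ((by fun_prop : Continuous fun x : ℝ => (1 - x ^ 2) ^ 2).continuousOn).mul
        (Real.continuous_exp.comp_continuousOn ((continuousOn_const.mul hu_cont).mono hs_sub))
    refine intervalIntegral.intervalIntegral_pos_of_pos_on hci.intervalIntegrable ?_ (by norm_num)
    intro x hx
    have h1 : 0 < 1 - x ^ 2 := by nlinarith [hx.1, hx.2]
    exact mul_pos (pow_pos h1 2) (Real.exp_pos _)
  have hh120 : ∀ t : ℝ, 120 - 128 * Real.exp (6 * u t) / gammaInt u ≤ 120 := by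
    intro t
    have h0 : 0 ≤ 128 * Real.exp (6 * u t) / gammaInt u :=
      div_nonneg (by positivity) hγ.le
    linarith
  -- smoothness infrastructure
  have hd_u : ContDiffOn ℝ (⊤ : ℕ∞) (deriv u) s := hu_smooth.deriv_of_isOpen hs_open le_rfl
  have hFs : ContDiffOn ℝ (⊤ : ℕ∞) F s := by
    rw [hFdef]
    exact ((by fun_prop : ContDiff ℝ (⊤ : ℕ∞) fun y : ℝ => (1 - y ^ 2) ^ 3).contDiffOn).mul hd_u
  have hGs : ContDiffOn ℝ (⊤ : ℕ∞) G s :=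
    (((by fun_prop : ContDiff ℝ (⊤ : ℕ∞) fun y : ℝ => 1 - y ^ 2).contDiffOn).mul hd_u).congr
      fun y _ => hG y
  have hone : (1 : WithTop ℕ∞) ≤ ((⊤ : ℕ∞) : WithTop ℕ∞) := by
    exact_mod_cast (le_top : (1 : ℕ∞) ≤ ⊤)
  have hiterF : ∀ i : ℕ, ContDiffOn ℝ (⊤ : ℕ∞) (deriv^[i] F) s := by
    intro i; induction i with
    | zero => exact hFs
    | succ k ih =>
      rw [Function.iterate_succ_apply']
      exact ih.deriv_of_isOpen hs_open le_rfl
  have hiterG : ∀ i : ℕ, ContDiffOn ℝ (⊤ : ℕ∞) (deriv^[i] G) s := by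
    intro i; induction i with
    | zero => exact hGs
    | succ k ih =>
      rw [Function.iterate_succ_apply']
      exact ih.deriv_of_isOpen hs_open le_rfl
  have hasF : ∀ i : ℕ, ∀ t ∈ s, HasDerivAt (deriv^[i] F) (deriv^[i + 1] F t) t := by
    intro i t ht
    have hdiff : DifferentiableAt ℝ (deriv^[i] F) t :=
      ((hiterF i).contDiffAt (hs_open.mem_nhds ht)).differentiableAt (by simp)
    have h := hdiff.hasDerivAt
    have e : deriv^[i + 1] F t = deriv (deriv^[i] F) t :=
      congrFun (Function.iterate_succ_apply' deriv i F) t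
    rw [e]
    exact h
  have hasG : ∀ i : ℕ, ∀ t ∈ s, HasDerivAt (deriv^[i] G) (deriv^[i + 1] G t) t := by
    intro i t ht
    have hdiff : DifferentiableAt ℝ (deriv^[i] G) t :=
      ((hiterG i).contDiffAt (hs_open.mem_nhds ht)).differentiableAt (by simp)
    have h := hdiff.hasDerivAt
    have e : deriv^[i + 1] G t = deriv (deriv^[i] G) t :=
      congrFun (Function.iterate_succ_apply' deriv i G) t
    rw [e]
    exact h
  have hcont5F : ContinuousOn (deriv^[5] F) s := (hiterF 5).continuousOn
  -- the ODE
  have hODE' : ∀ t ∈ Set.Ioo (-1 : ℝ) 1,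
      120 - 128 * Real.exp (6 * u t) / gammaInt u = α * deriv^[5] F t := by
    intro t ht
    have h := hODE t ht
    rw [iteratedDeriv_eq_iterate] at h
    linarith
  -- Leibniz formulas
  have hf0 : ∀ y : ℝ, F y = (1 - y ^ 2) ^ 2 * G y := by
    intro y
    simp only [hFdef, hG y]
    ring
  have hFGfun : F = fun z : ℝ => (1 - z ^ 2) ^ 2 * G z := funext hf0
  have hp2 : ∀ y : ℝ, HasDerivAt (fun z : ℝ => (1 - z ^ 2) ^ 2) (-4 * y + 4 * y ^ 3) y := by
    intro y
    have h := ((hasDerivAt_const y (1 : ℝ)).sub (hasDerivAt_pow 2 y)).pow 2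
    refine h.congr_deriv ?_
    push_cast
    simp only [Pi.sub_apply]
    ring
  have hp1 : ∀ y : ℝ, HasDerivAt (fun z : ℝ => -4 * z + 4 * z ^ 3) (-4 + 12 * y ^ 2) y := by
    intro y
    have h := ((hasDerivAt_id' (x := y)).const_mul (-4 : ℝ)).add ((hasDerivAt_pow 3 y).const_mul 4)
    refine h.congr_deriv ?_
    push_cast
    ring
  have hp12 : ∀ y : ℝ, HasDerivAt (fun z : ℝ => -4 + 12 * z ^ 2) (24 * y) y := by
    intro y
    have h := (hasDerivAt_const y (-4 : ℝ)).add ((hasDerivAt_pow 2 y).const_mul 12)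
    refine h.congr_deriv ?_
    push_cast
    ring
  have hf1 : ∀ y ∈ s, deriv^[1] F y
      = (-4 * y + 4 * y ^ 3) * G y + (1 - y ^ 2) ^ 2 * deriv^[1] G y := by
    intro y hy
    have hgy : HasDerivAt G (deriv^[1] G y) y := hasG 0 y hy
    have hF' : HasDerivAt F ((-4 * y + 4 * y ^ 3) * G y + (1 - y ^ 2) ^ 2 * deriv^[1] G y) y := by
      rw [hFGfun]
      exact (hp2 y).mul hgy
    rw [Function.iterate_one]
    exact hF'.deriv
  have hf2 : ∀ y ∈ s, deriv^[2] F y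
      = (-4 + 12 * y ^ 2) * G y + 2 * (-4 * y + 4 * y ^ 3) * deriv^[1] G y
        + (1 - y ^ 2) ^ 2 * deriv^[2] G y := by
    intro y hy
    have hev : deriv^[1] F =ᶠ[nhds y]
        fun z : ℝ => (-4 * z + 4 * z ^ 3) * G z + (1 - z ^ 2) ^ 2 * deriv^[1] G z :=
      Filter.eventuallyEq_of_mem (hs_open.mem_nhds hy) fun z hz => hf1 z hz
    have hg0 : HasDerivAt G (deriv^[1] G y) y := hasG 0 y hy
    have hg1 : HasDerivAt (deriv^[1] G) (deriv^[2] G y) y := hasG 1 y hy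
    have hD : HasDerivAt
        (fun z : ℝ => (-4 * z + 4 * z ^ 3) * G z + (1 - z ^ 2) ^ 2 * deriv^[1] G z)
        ((-4 + 12 * y ^ 2) * G y + 2 * (-4 * y + 4 * y ^ 3) * deriv^[1] G y
          + (1 - y ^ 2) ^ 2 * deriv^[2] G y) y := by
      have h := ((hp1 y).mul hg0).add ((hp2 y).mul hg1)
      refine h.congr_deriv ?_
      ring
    have e2 : deriv^[2] F y = deriv (deriv^[1] F) y :=
      congrFun (Function.iterate_succ_apply' deriv 1 F) y
    rw [e2, hev.deriv_eq]
    exact hD.deriv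
  have hf3 : ∀ y ∈ s, deriv^[3] F y
      = 24 * y * G y + 3 * (-4 + 12 * y ^ 2) * deriv^[1] G y
        + 3 * (-4 * y + 4 * y ^ 3) * deriv^[2] G y + (1 - y ^ 2) ^ 2 * deriv^[3] G y := by
    intro y hy
    have hev : deriv^[2] F =ᶠ[nhds y]
        fun z : ℝ => (-4 + 12 * z ^ 2) * G z + 2 * (-4 * z + 4 * z ^ 3) * deriv^[1] G z
          + (1 - z ^ 2) ^ 2 * deriv^[2] G z :=
      Filter.eventuallyEq_of_mem (hs_open.mem_nhds hy) fun z hz => hf2 z hz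
    have hg0 : HasDerivAt G (deriv^[1] G y) y := hasG 0 y hy
    have hg1 : HasDerivAt (deriv^[1] G) (deriv^[2] G y) y := hasG 1 y hy
    have hg2 : HasDerivAt (deriv^[2] G) (deriv^[3] G y) y := hasG 2 y hy
    have hD : HasDerivAt
        (fun z : ℝ => (-4 + 12 * z ^ 2) * G z + 2 * (-4 * z + 4 * z ^ 3) * deriv^[1] G z
          + (1 - z ^ 2) ^ 2 * deriv^[2] G z)
        (24 * y * G y + 3 * (-4 + 12 * y ^ 2) * deriv^[1] G y
          + 3 * (-4 * y + 4 * y ^ 3) * deriv^[2] G y + (1 - y ^ 2) ^ 2 * deriv^[3] G y) y := by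
      have h := (((hp12 y).mul hg0).add (((hp1 y).const_mul (2 : ℝ)).mul hg1)).add
        ((hp2 y).mul hg2)
      refine h.congr_deriv ?_
      ring
    have e3 : deriv^[3] F y = deriv (deriv^[2] F) y :=
      congrFun (Function.iterate_succ_apply' deriv 2 F) y
    rw [e3, hev.deriv_eq]
    exact hD.deriv
  have hf4 : ∀ y ∈ s, deriv^[4] F y
      = 24 * G y + 96 * y * deriv^[1] G y + 6 * (-4 + 12 * y ^ 2) * deriv^[2] G y
        + 4 * (-4 * y + 4 * y ^ 3) * deriv^[3] G y + (1 - y ^ 2) ^ 2 * deriv^[4] G y := by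
    intro y hy
    have hev : deriv^[3] F =ᶠ[nhds y]
        fun z : ℝ => 24 * z * G z + 3 * (-4 + 12 * z ^ 2) * deriv^[1] G z
          + 3 * (-4 * z + 4 * z ^ 3) * deriv^[2] G z + (1 - z ^ 2) ^ 2 * deriv^[3] G z :=
      Filter.eventuallyEq_of_mem (hs_open.mem_nhds hy) fun z hz => hf3 z hz
    have hg0 : HasDerivAt G (deriv^[1] G y) y := hasG 0 y hy
    have hg1 : HasDerivAt (deriv^[1] G) (deriv^[2] G y) y := hasG 1 y hy
    have hg2 : HasDerivAt (deriv^[2] G) (deriv^[3] G y) y := hasG 2 y hy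
    have hg3 : HasDerivAt (deriv^[3] G) (deriv^[4] G y) y := hasG 3 y hy
    have hq24 : HasDerivAt (fun z : ℝ => 24 * z) (24 : ℝ) y := by
      have h := (hasDerivAt_id' (x := y)).const_mul (24 : ℝ)
      refine h.congr_deriv ?_
      ring
    have hD : HasDerivAt
        (fun z : ℝ => 24 * z * G z + 3 * (-4 + 12 * z ^ 2) * deriv^[1] G z
          + 3 * (-4 * z + 4 * z ^ 3) * deriv^[2] G z + (1 - z ^ 2) ^ 2 * deriv^[3] G z)
        (24 * G y + 96 * y * deriv^[1] G y + 6 * (-4 + 12 * y ^ 2) * deriv^[2] G y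
          + 4 * (-4 * y + 4 * y ^ 3) * deriv^[3] G y + (1 - y ^ 2) ^ 2 * deriv^[4] G y) y := by
      have h := (((hq24.mul hg0).add (((hp12 y).const_mul (3 : ℝ)).mul hg1)).add
        (((hp1 y).const_mul (3 : ℝ)).mul hg2)).add ((hp2 y).mul hg3)
      refine h.congr_deriv ?_
      ring
    have e4 : deriv^[4] F y = deriv (deriv^[3] F) y :=
      congrFun (Function.iterate_succ_apply' deriv 3 F) y
    rw [e4, hev.deriv_eq]
    exact hD.deriv
  -- boundary values
  have hmem_m : (-1 : ℝ) ∈ s := hs_sub (by norm_num)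
  have hmem_p : (1 : ℝ) ∈ s := hs_sub (by norm_num)
  have hf1m : deriv^[1] F (-1) = 0 := by rw [hf1 (-1) hmem_m]; norm_num
  have hf1p : deriv^[1] F 1 = 0 := by rw [hf1 1 hmem_p]; norm_num
  have hF0m : F (-1) = 0 := by rw [hf0]; norm_num
  have hF0p : F (1 : ℝ) = 0 := by rw [hf0]; norm_num
  -- the master bound
  have bound : ∀ x, x ∈ Set.Ioo (-1 : ℝ) 1 →
      ∀ cA0 cA1 cA2 cA3 cA4 cB0 cB1 cB2 cB3 cB4 C JA JB T : ℝ,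
      Phi5 F cA0 cA1 cA2 cA3 cA4 (-1) = 0 →
      Phi5 F cB0 cB1 cB2 cB3 cB4 1 = 0 →
      (1 - x) ^ 3 * Phi5 F cA0 cA1 cA2 cA3 cA4 x - (1 + x) ^ 3 * Phi5 F cB0 cB1 cB2 cB3 cB4 x
        = ((1 + x) ^ 3 * (1 - x) ^ 3) * T →
      (∀ t ∈ Set.Icc (-1 : ℝ) x, 0 ≤ cA0 + cA1 * t + cA2 * t ^ 2 + cA3 * t ^ 3 + cA4 * t ^ 4) →
      (∀ t ∈ Set.Icc x (1 : ℝ), 0 ≤ cB0 + cB1 * t + cB2 * t ^ 2 + cB3 * t ^ 3 + cB4 * t ^ 4) →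
      (∫ t in (-1 : ℝ)..x, (cA0 + cA1 * t + cA2 * t ^ 2 + cA3 * t ^ 3 + cA4 * t ^ 4) * 120) = JA →
      (∫ t in x..(1 : ℝ), (cB0 + cB1 * t + cB2 * t ^ 2 + cB3 * t ^ 3 + cB4 * t ^ 4) * 120) = JB →
      (1 - x) ^ 3 * JA + (1 + x) ^ 3 * JB = C * ((1 + x) ^ 3 * (1 - x) ^ 3) →
      T ≤ C / α := by
    intro x hx cA0 cA1 cA2 cA3 cA4 cB0 cB1 cB2 cB3 cB4 C JA JB T hA0 hB1 hJump hposA hposB hJA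
      hJB hsum
    obtain ⟨hx1, hx2⟩ := hx
    have hax : (-1 : ℝ) ≤ x := hx1.le
    have hxb : x ≤ 1 := hx2.le
    have hsubA : Set.uIcc (-1 : ℝ) x ⊆ s := by
      rw [Set.uIcc_of_le hax]
      exact fun t ht => hs_sub ⟨ht.1, le_trans ht.2 hxb⟩
    have hsubB : Set.uIcc x (1 : ℝ) ⊆ s := by
      rw [Set.uIcc_of_le hxb]
      exact fun t ht => hs_sub ⟨le_trans hax ht.1, ht.2⟩
    have hIA : (∫ t in (-1 : ℝ)..x, (cA0 + cA1 * t + cA2 * t ^ 2 + cA3 * t ^ 3 + cA4 * t ^ 4) *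
        (120 - 128 * Real.exp (6 * u t) / gammaInt u)) = α * Phi5 F cA0 cA1 cA2 cA3 cA4 x := by
      have e1 : (∫ t in (-1 : ℝ)..x, (cA0 + cA1 * t + cA2 * t ^ 2 + cA3 * t ^ 3 + cA4 * t ^ 4) *
          (120 - 128 * Real.exp (6 * u t) / gammaInt u))
          = ∫ t in (-1 : ℝ)..x, α * ((cA0 + cA1 * t + cA2 * t ^ 2 + cA3 * t ^ 3 + cA4 * t ^ 4) *
            deriv^[5] F t) := by
        refine intervalIntegral.integral_congr_ae (Filter.Eventually.of_forall fun t ht => ?_)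
        rw [Set.uIoc_of_le hax] at ht
        rw [hODE' t ⟨ht.1, lt_of_le_of_lt ht.2 hx2⟩]
        ring
      rw [e1, intervalIntegral.integral_const_mul,
        ftc5 hasF hcont5F cA0 cA1 cA2 cA3 cA4 hsubA, hA0]
      ring
    have hIB : (∫ t in x..(1 : ℝ), (cB0 + cB1 * t + cB2 * t ^ 2 + cB3 * t ^ 3 + cB4 * t ^ 4) *
        (120 - 128 * Real.exp (6 * u t) / gammaInt u))
        = -(α * Phi5 F cB0 cB1 cB2 cB3 cB4 x) := by
      have e1 : (∫ t in x..(1 : ℝ), (cB0 + cB1 * t + cB2 * t ^ 2 + cB3 * t ^ 3 + cB4 * t ^ 4) *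
          (120 - 128 * Real.exp (6 * u t) / gammaInt u))
          = ∫ t in x..(1 : ℝ), α * ((cB0 + cB1 * t + cB2 * t ^ 2 + cB3 * t ^ 3 + cB4 * t ^ 4) *
            deriv^[5] F t) := by
        refine intervalIntegral.integral_congr_ae ?_
        have h1 : ∀ᵐ (t : ℝ), t ≠ (1 : ℝ) := by
          rw [MeasureTheory.ae_iff]
          simp only [ne_eq, not_not, Set.setOf_eq_eq_singleton]
          exact Real.volume_singleton
        filter_upwards [h1] with t ht1 ht
        rw [Set.uIoc_of_le hxb] at ht
        rw [hODE' t ⟨lt_of_lt_of_le hx1 ht.1.le, lt_of_le_of_ne ht.2 ht1⟩]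
        ring
      rw [e1, intervalIntegral.integral_const_mul,
        ftc5 hasF hcont5F cB0 cB1 cB2 cB3 cB4 hsubB, hB1]
      ring
    -- monotone bounds
    have hintA1 : IntervalIntegrable (fun t : ℝ =>
        (cA0 + cA1 * t + cA2 * t ^ 2 + cA3 * t ^ 3 + cA4 * t ^ 4) *
        (120 - 128 * Real.exp (6 * u t) / gammaInt u)) volume (-1) x :=
      (((by fun_prop : Continuous fun t : ℝ =>
        cA0 + cA1 * t + cA2 * t ^ 2 + cA3 * t ^ 3 + cA4 * t ^ 4).continuousOn).mul
        (hexp_cont.mono hsubA)).intervalIntegrable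
    have hintA2 : IntervalIntegrable (fun t : ℝ =>
        (cA0 + cA1 * t + cA2 * t ^ 2 + cA3 * t ^ 3 + cA4 * t ^ 4) * 120) volume (-1) x :=
      ((by fun_prop : Continuous fun t : ℝ =>
        (cA0 + cA1 * t + cA2 * t ^ 2 + cA3 * t ^ 3 + cA4 * t ^ 4) * 120).intervalIntegrable _ _)
    have hintB1 : IntervalIntegrable (fun t : ℝ =>
        (cB0 + cB1 * t + cB2 * t ^ 2 + cB3 * t ^ 3 + cB4 * t ^ 4) *
        (120 - 128 * Real.exp (6 * u t) / gammaInt u)) volume x 1 :=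
      (((by fun_prop : Continuous fun t : ℝ =>
        cB0 + cB1 * t + cB2 * t ^ 2 + cB3 * t ^ 3 + cB4 * t ^ 4).continuousOn).mul
        (hexp_cont.mono hsubB)).intervalIntegrable
    have hintB2 : IntervalIntegrable (fun t : ℝ =>
        (cB0 + cB1 * t + cB2 * t ^ 2 + cB3 * t ^ 3 + cB4 * t ^ 4) * 120) volume x 1 :=
      ((by fun_prop : Continuous fun t : ℝ =>
        (cB0 + cB1 * t + cB2 * t ^ 2 + cB3 * t ^ 3 + cB4 * t ^ 4) * 120).intervalIntegrable _ _)
    have hle1 : α * Phi5 F cA0 cA1 cA2 cA3 cA4 x ≤ JA := by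
      rw [← hIA, ← hJA]
      refine intervalIntegral.integral_mono_on hax hintA1 hintA2 fun t ht => ?_
      exact mul_le_mul_of_nonneg_left (hh120 t) (hposA t ht)
    have hle2 : -(α * Phi5 F cB0 cB1 cB2 cB3 cB4 x) ≤ JB := by
      rw [← hIB, ← hJB]
      refine intervalIntegral.integral_mono_on hxb hintB1 hintB2 fun t ht => ?_
      exact mul_le_mul_of_nonneg_left (hh120 t) (hposB t ht)
    -- combine
    have hwA : (0 : ℝ) ≤ (1 - x) ^ 3 := pow_nonneg (by linarith) 3
    have hwB : (0 : ℝ) ≤ (1 + x) ^ 3 := pow_nonneg (by linarith) 3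
    have key : α * (((1 + x) ^ 3 * (1 - x) ^ 3) * T)
        = (1 - x) ^ 3 * (α * Phi5 F cA0 cA1 cA2 cA3 cA4 x)
          + (1 + x) ^ 3 * (-(α * Phi5 F cB0 cB1 cB2 cB3 cB4 x)) := by
      linear_combination (-α) * hJump
    have hfin : α * (((1 + x) ^ 3 * (1 - x) ^ 3) * T) ≤ C * ((1 + x) ^ 3 * (1 - x) ^ 3) := by
      rw [key, ← hsum]
      exact add_le_add (mul_le_mul_of_nonneg_left hle1 hwA) (mul_le_mul_of_nonneg_left hle2 hwB)
    have hw : (0 : ℝ) < (1 + x) ^ 3 * (1 - x) ^ 3 :=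
      mul_pos (pow_pos (by linarith) 3) (pow_pos (by linarith) 3)
    rw [le_div_iff₀ hα]
    have h2 : (T * α) * ((1 + x) ^ 3 * (1 - x) ^ 3) ≤ C * ((1 + x) ^ 3 * (1 - x) ^ 3) := by
      nlinarith [hfin]
    exact le_of_mul_le_mul_right h2 hw
  constructor
  · -- the 150-bound
    intro x hx
    obtain ⟨hx1, hx2⟩ := hx
    have hxs : x ∈ s := hs_sub ⟨hx1.le, hx2.le⟩
    refine bound x ⟨hx1, hx2⟩ (5/2) (15/2) (15/2) (5/2) 0 (5/2) (-(15/2)) (15/2) (-(5/2)) 0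
      150 (75*(1+x)^4) (75*(1-x)^4) _ ?_ ?_ ?_ ?_ ?_ ?_ ?_ ?_
    · simp only [Phi5]
      rw [hf1m, hF0m]
      ring
    · simp only [Phi5]
      rw [hf1p, hF0p]
      ring
    · simp only [Phi5]
      rw [hf4 x hxs, hf3 x hxs, hf2 x hxs, hf1 x hxs, hf0 x]
      simp only [iteratedDeriv_eq_iterate, Function.iterate_one]
      ring
    · intro t ht
      nlinarith [pow_nonneg (by linarith [ht.1] : (0:ℝ) ≤ 1 + t) 3]
    · intro t ht
      nlinarith [pow_nonneg (by linarith [ht.2] : (0:ℝ) ≤ 1 - t) 3]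
    · have key : ∀ t ∈ Set.uIcc (-1:ℝ) x, HasDerivAt (fun z : ℝ => 75*(1+z)^4)
          ((5/2 + 15/2 * t + 15/2 * t ^ 2 + 5/2 * t ^ 3 + 0 * t ^ 4) * 120) t := by
        intro t _
        have h := (((hasDerivAt_id' (x := t)).const_add (1:ℝ)).pow 4).const_mul (75:ℝ)
        refine h.congr_deriv ?_
        push_cast
        ring
      rw [intervalIntegral.integral_eq_sub_of_hasDerivAt key
        ((by fun_prop : Continuous fun t : ℝ =>
          (5/2 + 15/2 * t + 15/2 * t ^ 2 + 5/2 * t ^ 3 + 0 * t ^ 4) * (120:ℝ)).intervalIntegrable _ _)]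
      norm_num
    · have key : ∀ t ∈ Set.uIcc x (1:ℝ), HasDerivAt (fun z : ℝ => -(75*(1-z)^4))
          ((5/2 + -(15/2) * t + 15/2 * t ^ 2 + -(5/2) * t ^ 3 + 0 * t ^ 4) * 120) t := by
        intro t _
        have h := ((((hasDerivAt_id' (x := t)).const_sub (1:ℝ)).pow 4).const_mul (75:ℝ)).neg
        refine h.congr_deriv ?_
        push_cast
        ring
      rw [intervalIntegral.integral_eq_sub_of_hasDerivAt key
        ((by fun_prop : Continuous fun t : ℝ =>
          (5/2 + -(15/2) * t + 15/2 * t ^ 2 + -(5/2) * t ^ 3 + 0 * t ^ 4) * (120:ℝ)).intervalIntegrable _ _)]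
      norm_num
    · ring
  · -- the 160-bound
    intro x hx
    obtain ⟨hx1, hx2⟩ := hx
    have hxs : x ∈ s := hs_sub ⟨hx1.le, hx2.le⟩
    refine bound x ⟨hx1, hx2⟩ (5/48*(25+3*x)) (5/48*(72+8*x)) (5/48*(66+6*x)) (5/3)
      (-(5/48)*(3+x)) (5/48*(25-3*x)) (5/48*(8*x-72)) (5/48*(66-6*x)) (-(5/3))
      (-(5/48)*(3-x)) 160 (5/2*(1+x)^4*(32+x-x^2)) (5/2*(1-x)^4*(32-x-x^2)) _
      ?_ ?_ ?_ ?_ ?_ ?_ ?_ ?_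
    · simp only [Phi5]
      rw [hf1m, hF0m]
      ring
    · simp only [Phi5]
      rw [hf1p, hF0p]
      ring
    · simp only [Phi5]
      rw [hf4 x hxs, hf3 x hxs, hf2 x hxs, hf1 x hxs, hf0 x]
      simp only [iteratedDeriv_eq_iterate, Function.iterate_one]
      ring
    · intro t ht
      have e1 : (0:ℝ) ≤ 1 + t := by linarith [ht.1]
      have e2 : (0:ℝ) ≤ 25 + 3*x - (3+x)*t := by
        nlinarith [mul_nonneg (show (0:ℝ) ≤ 3 + x by linarith)
          (show (0:ℝ) ≤ x - t by linarith [ht.2]),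
          mul_pos (show (0:ℝ) < 1 - x by linarith) (show (0:ℝ) < 1 + x by linarith)]
      nlinarith [mul_nonneg (pow_nonneg e1 3) e2]
    · intro t ht
      have e1 : (0:ℝ) ≤ 1 - t := by linarith [ht.2]
      have e2 : (0:ℝ) ≤ 25 - 3*x + (3-x)*t := by
        nlinarith [mul_nonneg (show (0:ℝ) ≤ 3 - x by linarith)
          (show (0:ℝ) ≤ t - x by linarith [ht.1]),
          mul_pos (show (0:ℝ) < 1 - x by linarith) (show (0:ℝ) < 1 + x by linarith)]
      nlinarith [mul_nonneg (pow_nonneg e1 3) e2]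
    · have key : ∀ t ∈ Set.uIcc (-1:ℝ) x, HasDerivAt
          (fun z : ℝ => 25/8*(28+4*x)*(1+z)^4 - 5/2*(3+x)*(1+z)^5)
          ((5/48*(25+3*x) + 5/48*(72+8*x) * t + 5/48*(66+6*x) * t ^ 2 + 5/3 * t ^ 3
            + -(5/48)*(3+x) * t ^ 4) * 120) t := by
        intro t _
        have h := ((((hasDerivAt_id' (x := t)).const_add (1:ℝ)).pow 4).const_mul
          (25/8*(28+4*x))).sub ((((hasDerivAt_id' (x := t)).const_add (1:ℝ)).pow 5).const_mul
          (5/2*(3+x)))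
        refine h.congr_deriv ?_
        push_cast
        ring
      rw [intervalIntegral.integral_eq_sub_of_hasDerivAt key
        ((by fun_prop : Continuous fun t : ℝ =>
          (5/48*(25+3*x) + 5/48*(72+8*x) * t + 5/48*(66+6*x) * t ^ 2 + 5/3 * t ^ 3
            + -(5/48)*(3+x) * t ^ 4) * (120:ℝ)).intervalIntegrable _ _)]
      ring
    · have key : ∀ t ∈ Set.uIcc x (1:ℝ), HasDerivAt
          (fun z : ℝ => -(25/8*(28-4*x)*(1-z)^4) + 5/2*(3-x)*(1-z)^5)
          ((5/48*(25-3*x) + 5/48*(8*x-72) * t + 5/48*(66-6*x) * t ^ 2 + -(5/3) * t ^ 3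
            + -(5/48)*(3-x) * t ^ 4) * 120) t := by
        intro t _
        have h := (((((hasDerivAt_id' (x := t)).const_sub (1:ℝ)).pow 4).const_mul
          (25/8*(28-4*x))).neg).add ((((hasDerivAt_id' (x := t)).const_sub (1:ℝ)).pow 5).const_mul
          (5/2*(3-x)))
        refine h.congr_deriv ?_
        push_cast
        ring
      rw [intervalIntegral.integral_eq_sub_of_hasDerivAt key
        ((by fun_prop : Continuous fun t : ℝ =>
          (5/48*(25-3*x) + 5/48*(8*x-72) * t + 5/48*(66-6*x) * t ^ 2 + -(5/3) * t ^ 3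
            + -(5/48)*(3-x) * t ^ 4) * (120:ℝ)).intervalIntegrable _ _)]
      ring
    · ring
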